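/- A k-periodic non-autonomous system (X, f_{1,∞}) on a compact metric space has the quasi-weak specification property if and only if the autonomous system (X, g), g = f_k ∘ ⋯ ∘ f_1, has the quasi-weak specification property. -/

import Mathlib

open Metric TopologicalSpace MeasureTheory

/-- `nIter f n = f_n ∘ ⋯ ∘ f_1` (with `f (i)` playing the role of `f_{i+1}`), `nIter f 0 = id`. -/
def nIter {X : Type*} (f : ℕ → X → X) : ℕ → X → X
  | 0 => id
  | n + 1 => f n ∘ nIter f n

/-- Strong specification property for a non-autonomous system. -/
def SSP {X : Type*} [MetricSpace X] (f : ℕ → X → X) : Prop :=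
  ∀ ε : ℝ, ε > 0 → ∃ M : ℕ, ∀ k : ℕ, 1 ≤ k → ∀ (x : ℕ → X) (a b : ℕ → ℕ),
    (∀ i, i < k → a i ≤ b i) →
    (∀ i, i + 1 < k → b i < a (i + 1) ∧ M < a (i + 1) - b i) →
    ∀ p : ℕ, M + b (k - 1) - a 0 < p →
      ∃ z : X, (∀ m : ℕ, nIter f (p * m) z = z) ∧
        ∀ i, i < k → ∀ j, a i ≤ j → j ≤ b i →
          dist (nIter f j z) (nIter f j (x i)) < ε

/-- Weak specification property for a non-autonomous system. -/
def WSP {X : Type*} [MetricSpace X] (f : ℕ → X → X) : Prop :=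
  ∀ ε : ℝ, ε > 0 → ∃ N : ℕ, ∀ s : ℕ, 1 ≤ s → ∀ (x : ℕ → X) (a b : ℕ → ℕ),
    (∀ i, i < s → a i ≤ b i) →
    (∀ i, i + 1 < s → b i < a (i + 1) ∧ N < a (i + 1) - b i) →
      ∃ z : X, ∀ i, i < s → ∀ j, a i ≤ j → j ≤ b i →
        dist (nIter f j z) (nIter f j (x i)) < ε

/-- Quasi-weak specification property for a non-autonomous system. -/
def QSP {X : Type*} [MetricSpace X] (f : ℕ → X → X) : Prop :=
  ∀ ε : ℝ, ε > 0 → ∃ M : ℕ, ∀ x₁ x₂ : X, ∀ n : ℕ, M ≤ n →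
    ∃ z : X, dist z x₁ < ε ∧ dist (nIter f n z) (nIter f n x₂) < ε

/-- Topological mixing for a non-autonomous system. -/
def TopMixing {X : Type*} [TopologicalSpace X] (f : ℕ → X → X) : Prop :=
  ∀ U V : Set X, IsOpen U → IsOpen V → U.Nonempty → V.Nonempty →
    ∃ N : ℕ, ∀ n : ℕ, N ≤ n → (nIter f n '' U ∩ V).Nonempty

/-- Topological transitivity for a non-autonomous system. -/
def TopTransitive {X : Type*} [TopologicalSpace X] (f : ℕ → X → X) : Prop :=
  ∀ U V : Set X, IsOpen U → IsOpen V → U.Nonempty → V.Nonempty →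
    ∃ n : ℕ, 1 ≤ n ∧ (nIter f n '' U ∩ V).Nonempty

/-- Sensitive dependence on initial conditions for a non-autonomous system. -/
def Sensitive {X : Type*} [MetricSpace X] (f : ℕ → X → X) : Prop :=
  ∃ δ : ℝ, δ > 0 ∧ ∀ x : X, ∀ U : Set X, IsOpen U → x ∈ U →
    ∃ y ∈ U, ∃ n : ℕ, 1 ≤ n ∧ δ < dist (nIter f n x) (nIter f n y)

lemma nIter_cont {X : Type*} [MetricSpace X] (f : ℕ → X → X) (hc : ∀ n, Continuous (f n)) :
    ∀ n, Continuous (nIter f n)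
  | 0 => continuous_id
  | n + 1 => (hc n).comp (nIter_cont f hc n)

lemma ucont {X : Type*} [MetricSpace X] [CompactSpace X] (f : ℕ → X → X)
    (hc : ∀ n, Continuous (f n)) (ε : ℝ) (hε : 0 < ε) (k : ℕ) :
    ∃ δ > 0, δ ≤ ε ∧ ∀ r < k, ∀ a b : X, dist a b < δ →
      dist (nIter f r a) (nIter f r b) < ε := by
  induction k with
  | zero => exact ⟨ε, hε, le_refl ε, fun r hr => absurd hr (Nat.not_lt_zero r)⟩
  | succ k ih =>
    obtain ⟨δ, hδ, hδε, hδk⟩ := ih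
    have hu : UniformContinuous (nIter f k) :=
      CompactSpace.uniformContinuous_of_continuous (nIter_cont f hc k)
    rw [Metric.uniformContinuous_iff] at hu
    obtain ⟨δ', hδ', hδ'k⟩ := hu ε hε
    refine ⟨min δ δ', lt_min hδ hδ', (min_le_left _ _).trans hδε, ?_⟩
    intro r hr a b hab
    rcases Nat.lt_succ_iff_lt_or_eq.mp hr with h | h
    · exact hδk r h a b (hab.trans_le (min_le_left _ _))
    · subst h; exact hδ'k (hab.trans_le (min_le_right _ _))

theorem stmt16 {X : Type*} [MetricSpace X] [CompactSpace X]
    (f : ℕ → X → X) (hc : ∀ n, Continuous (f n)) (hs : ∀ n, Function.Surjective (f n))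
    (k : ℕ) (hk : 1 ≤ k) (hper : ∀ n x, f (n + k) x = f n x) :
    QSP f ↔ QSP (fun _ => nIter f k) := by
  set g := nIter f k with hg
  have addk : ∀ m (x : X), nIter f (m + k) x = nIter f m (g x) := by
    intro m
    induction m with
    | zero => intro x; simp [nIter, hg]
    | succ m ih =>
      intro x
      have h1 : m + 1 + k = (m + k) + 1 := by ring
      rw [h1]
      show f (m + k) (nIter f (m + k) x) = f m (nIter f m (g x))
      rw [hper, ih]
  have decomp : ∀ q r (x : X), nIter f (r + q * k) x = nIter f r (g^[q] x) := by
    intro q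
    induction q with
    | zero => intro r x; simp
    | succ q ih =>
      intro r x
      have h1 : r + (q + 1) * k = (r + q * k) + k := by ring
      rw [h1, addk, ih, ← Function.iterate_succ_apply]
  have gconst : ∀ n (x : X), nIter (fun _ => g) n x = g^[n] x := by
    intro n
    induction n with
    | zero => intro x; rfl
    | succ n ih =>
      intro x
      show g (nIter (fun _ => g) n x) = _
      rw [ih]; exact (Function.iterate_succ_apply' g n x).symm
  constructor
  · intro h ε hε
    obtain ⟨M, hM⟩ := h ε hε
    refine ⟨M, fun x₁ x₂ n hn => ?_⟩
    obtain ⟨z, hz1, hz2⟩ := hM x₁ x₂ (n * k)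
      (le_trans hn (Nat.le_mul_of_pos_right n (by omega)))
    have e : ∀ x : X, nIter f (n * k) x = g^[n] x := by
      intro x
      have := decomp n 0 x
      simpa [nIter] using this
    refine ⟨z, hz1, ?_⟩
    rw [gconst, gconst, ← e, ← e]
    exact hz2
  · intro h ε hε
    obtain ⟨δ, hδ, hδε, hδk⟩ := ucont f hc ε hε k
    obtain ⟨M, hM⟩ := h δ hδ
    refine ⟨k * (M + 1), fun x₁ x₂ n hn => ?_⟩
    have hk0 : 0 < k := hk
    have hq : M ≤ n / k := by
      have h2 : M + 1 ≤ n / k :=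
        (Nat.le_div_iff_mul_le hk0).mpr (by rw [Nat.mul_comm]; exact hn)
      omega
    obtain ⟨z, hz1, hz2⟩ := hM x₁ x₂ (n / k) hq
    refine ⟨z, lt_of_lt_of_le hz1 hδε, ?_⟩
    have hr : n % k < k := Nat.mod_lt n hk0
    have e : ∀ x : X, nIter f n x = nIter f (n % k) (g^[n / k] x) := by
      intro x
      have := decomp (n / k) (n % k) x
      rwa [Nat.mod_add_div'] at this
    rw [gconst, gconst] at hz2
    rw [e z, e x₂]
    exact hδk (n % k) hr _ _ hz2
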